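/- Let A ⊆ B(H) be an operator algebra such that the infinite amplification H^(∞) = H ⊗ ℓ² has the reduction property as an A-module. Then there exists a constant K ≥ 1 such that every closed A-submodule V ⊆ H is the range of a bounded module projection p ∈ A′ (the commutant of A) with ‖p‖ ≤ K. -/

import Mathlib

open scoped ENNReal NNReal

section aux

variable {H : Type*} [NormedAddCommGroup H] [InnerProductSpace ℂ H] [CompleteSpace H]

local notation "E" => lp (fun _ : ℕ => H) 2

lemma aux_eval_continuous (i : ℕ) : Continuous (fun ξ : E => ξ i) := by
  refine (LipschitzWith.of_dist_le_mul (K := 1) fun ξ η => ?_).continuous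
  rw [dist_eq_norm, dist_eq_norm, NNReal.coe_one, one_mul]
  have : ξ i - η i = (ξ - η) i := by rw [lp.coeFn_sub]; rfl
  rw [this]
  exact lp.norm_apply_le_norm two_ne_zero (ξ - η) i

lemma aux_memℓp_comp (a : H →L[ℂ] H) (ξ : E) : Memℓp (fun i => a (ξ i)) 2 := by
  apply memℓp_gen
  have h2 : (2 : ℝ≥0∞).toReal = 2 := by norm_num
  rw [h2]
  have hs : Summable fun i => ‖a‖ ^ (2:ℝ) * ‖ξ i‖ ^ (2:ℝ) := by
    refine Summable.mul_left _ ?_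
    have := (lp.memℓp ξ).summable (p := 2) (by rw [h2]; norm_num)
    rwa [h2] at this
  refine Summable.of_nonneg_of_le (fun i => ?_) (fun i => ?_) hs
  · positivity
  · calc ‖a (ξ i)‖ ^ (2:ℝ) ≤ (‖a‖ * ‖ξ i‖) ^ (2:ℝ) := by
          refine Real.rpow_le_rpow (norm_nonneg _) (a.le_opNorm _) (by norm_num)
    _ = ‖a‖ ^ (2:ℝ) * ‖ξ i‖ ^ (2:ℝ) := Real.mul_rpow (norm_nonneg _) (norm_nonneg _)

end aux

theorem projection_constant_of_complete_reduction
    {H : Type*} [NormedAddCommGroup H] [InnerProductSpace ℂ H] [CompleteSpace H]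
    (A : Subalgebra ℂ (H →L[ℂ] H)) (hA : IsClosed (A : Set (H →L[ℂ] H)))
    (hred : ∀ V : Submodule ℂ (lp (fun _ : ℕ => H) 2), IsClosed (V : Set (lp (fun _ : ℕ => H) 2)) →
      (∀ a ∈ A, ∀ ξ ∈ V, ∀ η : lp (fun _ : ℕ => H) 2, (∀ i, η i = a (ξ i)) → η ∈ V) →
      ∃ W : Submodule ℂ (lp (fun _ : ℕ => H) 2), IsClosed (W : Set (lp (fun _ : ℕ => H) 2)) ∧
        (∀ a ∈ A, ∀ ξ ∈ W, ∀ η : lp (fun _ : ℕ => H) 2, (∀ i, η i = a (ξ i)) → η ∈ W) ∧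
        V ⊓ W = ⊥ ∧ V ⊔ W = ⊤) :
    ∃ K : ℝ, 1 ≤ K ∧ ∀ V : Submodule ℂ H, IsClosed (V : Set H) →
      (∀ a ∈ A, ∀ x ∈ V, a x ∈ V) →
      ∃ p : H →L[ℂ] H, IsIdempotentElem p ∧ (∀ x : H, p x ∈ V) ∧ (∀ x ∈ V, p x = x) ∧
        (∀ a ∈ A, Commute a p) ∧ ‖p‖ ≤ K := by
  by_contra hcon
  push_neg at hcon
  -- choose bad submodules
  choose Vn hVc hVinv hVbad using fun n : ℕ =>
    hcon ((n : ℝ) + 1) (le_add_of_nonneg_left (Nat.cast_nonneg n))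
  classical
  let 𝒱 : Submodule ℂ (lp (fun _ : ℕ => H) 2) :=
    { carrier := {ξ | ∀ i, ξ i ∈ Vn i}
      add_mem' := fun {ξ η} hξ hη i => by
        rw [lp.coeFn_add]; exact (Vn i).add_mem (hξ i) (hη i)
      zero_mem' := fun i => by rw [lp.coeFn_zero]; exact (Vn i).zero_mem
      smul_mem' := fun c ξ hξ i => by rw [lp.coeFn_smul]; exact (Vn i).smul_mem c (hξ i) }
  have h𝒱mem : ∀ ξ : lp (fun _ : ℕ => H) 2, ξ ∈ 𝒱 ↔ ∀ i, ξ i ∈ Vn i := fun ξ => Iff.rfl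
  have h𝒱c : IsClosed (𝒱 : Set (lp (fun _ : ℕ => H) 2)) := by
    have heq : (𝒱 : Set (lp (fun _ : ℕ => H) 2)) =
        ⋂ i, (fun ξ : lp (fun _ : ℕ => H) 2 => ξ i) ⁻¹' (Vn i) := by
      ext ξ; simp only [Set.mem_iInter, Set.mem_preimage, SetLike.mem_coe, h𝒱mem]
    rw [heq]
    exact isClosed_iInter fun i => (hVc i).preimage (aux_eval_continuous i)
  have h𝒱inv : ∀ a ∈ A, ∀ ξ ∈ 𝒱, ∀ η : lp (fun _ : ℕ => H) 2,
      (∀ i, η i = a (ξ i)) → η ∈ 𝒱 :=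
    fun a ha ξ hξ η hη i => by rw [hη i]; exact hVinv i a ha (ξ i) (hξ i)
  obtain ⟨W, hWc, hWinv, hbot, htop⟩ := hred 𝒱 h𝒱c h𝒱inv
  have hcompl : IsCompl 𝒱 W := ⟨disjoint_iff.mpr hbot, codisjoint_iff.mpr htop⟩
  let P0 := 𝒱.linearProjOfClosedCompl W hcompl h𝒱c hWc
  let P : lp (fun _ : ℕ => H) 2 →L[ℂ] lp (fun _ : ℕ => H) 2 := 𝒱.subtypeL.comp P0
  have hPmem : ∀ ξ, P ξ ∈ 𝒱 := fun ξ => (P0 ξ).2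
  have hPcoe : ∀ ξ, P ξ = (Submodule.projectionOnto 𝒱 W hcompl ξ : lp (fun _ : ℕ => H) 2) :=
    fun ξ => by
      show (𝒱.subtypeL (P0 ξ) : lp (fun _ : ℕ => H) 2) = _
      rw [Submodule.subtypeL_apply]
      congr 1
  have hPleft : ∀ ξ (_ : ξ ∈ 𝒱), P ξ = ξ := fun ξ hξ => by
    rw [hPcoe]
    exact congrArg Subtype.val (Submodule.linearProjOfIsCompl_apply_left hcompl ⟨ξ, hξ⟩)
  have hPright : ∀ ξ (_ : ξ ∈ W), P ξ = 0 := fun ξ hξ => by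
    rw [hPcoe, Submodule.projectionOnto_apply_of_mem_right hcompl hξ]
    rfl
  have key : ∀ a ∈ A, ∀ ξ η : lp (fun _ : ℕ => H) 2, (∀ i, η i = a (ξ i)) →
      ∀ i, (P η) i = a ((P ξ) i) := by
    intro a ha ξ η hη i
    obtain ⟨v, hv, w, hw, hvw⟩ := Submodule.mem_sup.mp (htop ▸ Submodule.mem_top (x := ξ))
    let ηv : lp (fun _ : ℕ => H) 2 := ⟨fun j => a (v j), aux_memℓp_comp a v⟩
    let ηw : lp (fun _ : ℕ => H) 2 := ⟨fun j => a (w j), aux_memℓp_comp a w⟩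
    have hηv : ηv ∈ 𝒱 := fun j => hVinv j a ha (v j) (hv j)
    have hηw : ηw ∈ W := hWinv a ha w hw ηw (fun j => rfl)
    have hsplit : η = ηv + ηw := by
      apply lp.ext; funext j
      have h1 : ξ j = v j + w j := by
        rw [← hvw]; simp only [lp.coeFn_add, Pi.add_apply]
      have h2 : (ηv + ηw : lp (fun _ : ℕ => H) 2) j = a (v j) + a (w j) := by
        simp only [lp.coeFn_add, Pi.add_apply]; rfl
      show η j = (ηv + ηw : lp (fun _ : ℕ => H) 2) j
      rw [hη j, h1, h2]
      exact map_add a _ _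
    have hPξ : P ξ = v := by
      rw [← hvw, map_add, hPleft v hv, hPright w hw, add_zero]
    have hPη : P η = ηv := by
      rw [hsplit, map_add, hPleft ηv hηv, hPright ηw hηw, add_zero]
    rw [hPη, hPξ]
  -- construct the compressed projection at index n₀
  set n₀ : ℕ := ⌈‖P‖⌉₊ with hn₀
  have htr : (2 : ℝ≥0∞).toReal = 2 := by norm_num
  have hsadd : ∀ x y : H, lp.single (E := fun _ : ℕ => H) 2 n₀ (x + y)
      = lp.single 2 n₀ x + lp.single 2 n₀ y := by
    intro x y; apply lp.ext; funext j
    simp only [lp.coeFn_add, Pi.add_apply]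
    by_cases h : j = n₀
    · subst h
      rw [lp.single_apply_self, lp.single_apply_self, lp.single_apply_self]
    · rw [lp.single_apply_ne _ _ _ h, lp.single_apply_ne _ _ _ h, lp.single_apply_ne _ _ _ h,
        add_zero]
  let pl : H →ₗ[ℂ] H :=
    { toFun := fun x => (P (lp.single 2 n₀ x)) n₀
      map_add' := fun x y => by
        simp only [hsadd, map_add]
        rw [lp.coeFn_add]; rfl
      map_smul' := fun c x => by
        simp only [RingHom.id_apply]
        rw [lp.single_smul, map_smul, lp.coeFn_smul]; rfl }
  have hb : ∀ x : H, ‖pl x‖ ≤ ‖P‖ * ‖x‖ := by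
    intro x
    have h1 : ‖(P (lp.single 2 n₀ x)) n₀‖ ≤ ‖P (lp.single 2 n₀ x)‖ :=
      lp.norm_apply_le_norm two_ne_zero _ n₀
    have h3 : ‖lp.single (E := fun _ : ℕ => H) 2 n₀ x‖ = ‖x‖ := by
      simpa using lp.norm_single (E := fun _ : ℕ => H) (p := 2)
        (by rw [htr]; norm_num) (fun _ => x) n₀
    calc ‖pl x‖ ≤ ‖P (lp.single 2 n₀ x)‖ := h1
      _ ≤ ‖P‖ * ‖lp.single (E := fun _ : ℕ => H) 2 n₀ x‖ := P.le_opNorm _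
      _ = ‖P‖ * ‖x‖ := by rw [h3]
  let p : H →L[ℂ] H := pl.mkContinuous ‖P‖ hb
  have hpapp : ∀ x : H, p x = (P (lp.single 2 n₀ x)) n₀ := fun x => rfl
  have hrange : ∀ x : H, p x ∈ Vn n₀ := fun x => hPmem (lp.single 2 n₀ x) n₀
  have hfix : ∀ x ∈ Vn n₀, p x = x := by
    intro x hx
    have hmem : lp.single (E := fun _ : ℕ => H) 2 n₀ x ∈ 𝒱 := by
      intro j
      by_cases h : j = n₀
      · subst h; rw [lp.single_apply_self]; exact hx
      · rw [lp.single_apply_ne _ _ _ h]; exact (Vn j).zero_mem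
    rw [hpapp, hPleft _ hmem, lp.single_apply_self]
  have hidem : IsIdempotentElem p := by
    ext x
    show p (p x) = p x
    exact hfix (p x) (hrange x)
  have hcomm : ∀ a ∈ A, Commute a p := by
    intro a ha
    have hkey : ∀ x : H, p (a x) = a (p x) := by
      intro x
      have heq : ∀ j, (lp.single (E := fun _ : ℕ => H) 2 n₀ (a x)) j
          = a ((lp.single (E := fun _ : ℕ => H) 2 n₀ x) j) := by
        intro j
        by_cases h : j = n₀
        · subst h; rw [lp.single_apply_self, lp.single_apply_self]
        · rw [lp.single_apply_ne _ _ _ h, lp.single_apply_ne _ _ _ h, map_zero]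
      exact key a ha _ _ heq n₀
    ext x
    show a (p x) = p (a x)
    exact (hkey x).symm
  have hlt := hVbad n₀ p hidem hrange hfix hcomm
  have hple : ‖p‖ ≤ ‖P‖ := pl.mkContinuous_norm_le (norm_nonneg P) hb
  have hceil : ‖P‖ ≤ (n₀ : ℝ) := Nat.le_ceil _
  linarith
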